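/- arXiv:2110.08051 — 3 statements merged into one kernel-verified Lean document; each statement's English description precedes it below -/
import Mathlib

section
/- Let G_A, G_B : ℝ → ℝ be service-time distribution functions (monotone nondecreasing on [0,∞), with 0 ≤ G(v) ≤ 1 for v ≥ 0 and G(v) → 1 as v → ∞), with finite means α_A = ∫₀^∞ (1 − G_A(v)) dv and α_B = ∫₀^∞ (1 − G_B(v)) dv, and assume v ↦ 1 − G_A(v) and v ↦ 1 − G_B(v) are integrable on [0,∞). Let λ_A, λ_B ≥ 0 and p ∈ [0,1]. Let m_A, m_B : ℝ → ℝ be functions with m_A(t) → m_A∞ and m_B(t) → m_B∞ as t → ∞, and suppose the equilibrium equation m_A(t)·λ_A·∫₀ᵗ (1 − G_A(v)) dv = m_B(t)·∫₀ᵗ (p·λ_A·G_A(v) + λ_B)·(1 − G_B(t − v)) dv holds for all t ≥ 0. If λ_A·α_A > 0 and (p·λ_A + λ_B)·α_B > 0, then m_A∞·λ_A·α_A = m_B∞·(p·λ_A + λ_B)·α_B. -/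
open MeasureTheory Filter Real Set

/-- Long-run equilibrium condition (Eq. (3)) of the pensions fund network:
if the equilibrium equation holds for all `t ≥ 0` and the unitary contribution and
pension means converge, then `m_A∞·λ_A·α_A = m_B∞·(p·λ_A + λ_B)·α_B`. -/
theorem pension_fund_long_run_equilibrium
    (G_A G_B : ℝ → ℝ)
    (hGA_mono : MonotoneOn G_A (Set.Ici 0))
    (hGB_mono : MonotoneOn G_B (Set.Ici 0))
    (hGA_bdd : ∀ v ≥ (0:ℝ), 0 ≤ G_A v ∧ G_A v ≤ 1)
    (hGB_bdd : ∀ v ≥ (0:ℝ), 0 ≤ G_B v ∧ G_B v ≤ 1)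
    (hGA_lim : Tendsto G_A atTop (nhds 1))
    (hGB_lim : Tendsto G_B atTop (nhds 1))
    (hGA_int : IntegrableOn (fun v => 1 - G_A v) (Set.Ici 0))
    (hGB_int : IntegrableOn (fun v => 1 - G_B v) (Set.Ici 0))
    (α_A α_B : ℝ)
    (hαA : α_A = ∫ v in Set.Ioi (0:ℝ), (1 - G_A v))
    (hαB : α_B = ∫ v in Set.Ioi (0:ℝ), (1 - G_B v))
    (lam_A lam_B : ℝ) (hlamA : 0 ≤ lam_A) (hlamB : 0 ≤ lam_B)
    (p : ℝ) (hp : p ∈ Set.Icc (0:ℝ) 1)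
    (m_A m_B : ℝ → ℝ) (mA_inf mB_inf : ℝ)
    (hmA : Tendsto m_A atTop (nhds mA_inf))
    (hmB : Tendsto m_B atTop (nhds mB_inf))
    (heq : ∀ t ≥ (0:ℝ),
      m_A t * (lam_A * ∫ v in (0:ℝ)..t, (1 - G_A v))
        = m_B t * ∫ v in (0:ℝ)..t, (p * lam_A * G_A v + lam_B) * (1 - G_B (t - v)))
    (hA_pos : 0 < lam_A * α_A)
    (hB_pos : 0 < (p * lam_A + lam_B) * α_B) :
    mA_inf * lam_A * α_A = mB_inf * ((p * lam_A + lam_B) * α_B) := by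
  obtain ⟨hp0, hp1⟩ := hp
  set GA' : ℝ → ℝ := fun v => G_A (max v 0) with hGA'def
  set GB' : ℝ → ℝ := fun v => G_B (max v 0) with hGB'def
  have hGA'mono : Monotone GA' := fun a b hab =>
    hGA_mono (le_max_right a 0) (le_max_right b 0) (max_le_max hab le_rfl)
  have hGB'mono : Monotone GB' := fun a b hab =>
    hGB_mono (le_max_right a 0) (le_max_right b 0) (max_le_max hab le_rfl)
  have hGA'eq : ∀ v ≥ (0:ℝ), GA' v = G_A v := fun v hv => by
    simp [hGA'def, max_eq_left hv]
  have hGB'eq : ∀ v ≥ (0:ℝ), GB' v = G_B v := fun v hv => by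
    simp [hGB'def, max_eq_left hv]
  have hGA'bdd : ∀ v, 0 ≤ GA' v ∧ GA' v ≤ 1 := fun v => hGA_bdd _ (le_max_right v 0)
  have hGB'bdd : ∀ v, 0 ≤ GB' v ∧ GB' v ≤ 1 := fun v => hGB_bdd _ (le_max_right v 0)
  have hGA'lim : Tendsto GA' atTop (nhds 1) := by
    refine hGA_lim.congr' ?_
    filter_upwards [eventually_ge_atTop (0:ℝ)] with v hv
    exact (hGA'eq v hv).symm
  have hGB'int : IntegrableOn (fun u => 1 - GB' u) (Set.Ioi 0) := by
    refine ((hGB_int.mono_set Ioi_subset_Ici_self).congr ?_)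
    filter_upwards [ae_restrict_mem measurableSet_Ioi] with u hu
    rw [hGB'eq u (le_of_lt hu)]
  have hplamA : 0 ≤ p * lam_A := mul_nonneg hp0 hlamA
  -- LHS integral limit
  have hIA : Tendsto (fun t => ∫ v in (0:ℝ)..t, (1 - G_A v)) atTop (nhds α_A) := by
    rw [hαA]
    exact intervalIntegral_tendsto_integral_Ioi 0 (hGA_int.mono_set Ioi_subset_Ici_self) tendsto_id
  -- RHS integral limit via dominated convergence
  set F : ℝ → ℝ → ℝ := fun t u =>
    (Set.Ioc (0:ℝ) t).indicator (fun u => (p * lam_A * GA' (t - u) + lam_B) * (1 - GB' u)) u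
    with hFdef
  have hDCT : Tendsto (fun t => ∫ u in Set.Ioi (0:ℝ), F t u) atTop
      (nhds (∫ u in Set.Ioi (0:ℝ), (p * lam_A + lam_B) * (1 - GB' u))) := by
    refine tendsto_integral_filter_of_dominated_convergence
      (fun u => (p * lam_A + lam_B) * (1 - GB' u)) ?_ ?_ ?_ ?_
    · refine Eventually.of_forall fun t => ?_
      have m1 : Measurable fun u : ℝ => GA' (t - u) :=
        hGA'mono.measurable.comp (measurable_const.sub measurable_id)
      exact ((((m1.const_mul (p * lam_A)).add_const lam_B).mul
        (measurable_const.sub hGB'mono.measurable)).indicator measurableSet_Ioc).aestronglyMeasurable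
    · refine Eventually.of_forall fun t => ae_of_all _ fun u => ?_
      have hb1 : 0 ≤ 1 - GB' u := sub_nonneg.2 (hGB'bdd u).2
      by_cases hu : u ∈ Set.Ioc (0:ℝ) t
      · rw [hFdef]
        simp only [Set.indicator_of_mem hu, Real.norm_eq_abs]
        rw [abs_of_nonneg (mul_nonneg (add_nonneg (mul_nonneg hplamA (hGA'bdd _).1) hlamB) hb1)]
        refine mul_le_mul_of_nonneg_right ?_ hb1
        nlinarith [(hGA'bdd (t - u)).2]
      · rw [hFdef]
        simp only [Set.indicator_of_notMem hu, norm_zero]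
        exact mul_nonneg (add_nonneg hplamA hlamB) hb1
    · exact hGB'int.const_mul _
    · filter_upwards [ae_restrict_mem measurableSet_Ioi] with u hu
      have h1 : Tendsto (fun t : ℝ => GA' (t - u)) atTop (nhds 1) := by
        refine hGA'lim.comp ?_
        simpa [sub_eq_add_neg] using tendsto_atTop_add_const_right atTop (-u) tendsto_id
      have h2 : Tendsto (fun t : ℝ => (p * lam_A * GA' (t - u) + lam_B) * (1 - GB' u))
          atTop (nhds ((p * lam_A * 1 + lam_B) * (1 - GB' u))) :=
        ((h1.const_mul _).add_const _).mul_const _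
      rw [mul_one] at h2
      refine h2.congr' ?_
      filter_upwards [eventually_ge_atTop u] with t ht
      rw [hFdef]
      simp [Set.indicator_of_mem (Set.mem_Ioc.2 ⟨hu, ht⟩)]
  have hval : (∫ u in Set.Ioi (0:ℝ), (p * lam_A + lam_B) * (1 - GB' u))
      = (p * lam_A + lam_B) * α_B := by
    rw [integral_const_mul, hαB]
    congr 1
    refine setIntegral_congr_fun measurableSet_Ioi fun u hu => ?_
    rw [hGB'eq u (le_of_lt hu)]
  have hJ : Tendsto (fun t => ∫ v in (0:ℝ)..t,
      (p * lam_A * G_A v + lam_B) * (1 - G_B (t - v))) atTop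
      (nhds ((p * lam_A + lam_B) * α_B)) := by
    rw [← hval]
    refine hDCT.congr' ?_
    filter_upwards [eventually_ge_atTop (0:ℝ)] with t ht
    have step1 : (∫ v in (0:ℝ)..t, (p * lam_A * G_A v + lam_B) * (1 - G_B (t - v)))
        = ∫ v in (0:ℝ)..t, (p * lam_A * GA' v + lam_B) * (1 - GB' (t - v)) := by
      refine intervalIntegral.integral_congr fun v hv => ?_
      rw [Set.uIcc_of_le ht] at hv
      rw [hGA'eq v hv.1, hGB'eq (t - v) (by linarith [hv.2])]
    have step2 : (∫ v in (0:ℝ)..t, (p * lam_A * GA' v + lam_B) * (1 - GB' (t - v)))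
        = ∫ u in (0:ℝ)..t, (p * lam_A * GA' (t - u) + lam_B) * (1 - GB' u) := by
      have := intervalIntegral.integral_comp_sub_left (a := (0:ℝ)) (b := t)
        (fun u => (p * lam_A * GA' (t - u) + lam_B) * (1 - GB' u)) t
      simp only [sub_sub_cancel, sub_zero, sub_self] at this
      exact this
    have step3 : (∫ u in (0:ℝ)..t, (p * lam_A * GA' (t - u) + lam_B) * (1 - GB' u))
        = ∫ u in Set.Ioi (0:ℝ), F t u := by
      rw [intervalIntegral.integral_of_le ht, hFdef]
      rw [integral_indicator measurableSet_Ioc, Measure.restrict_restrict measurableSet_Ioc,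
        Set.inter_eq_left.2 Set.Ioc_subset_Ioi_self]
    rw [step3.symm, step2.symm, step1.symm]
  have hL : Tendsto (fun t => m_A t * (lam_A * ∫ v in (0:ℝ)..t, (1 - G_A v))) atTop
      (nhds (mA_inf * (lam_A * α_A))) := hmA.mul (hIA.const_mul lam_A)
  have hR : Tendsto (fun t => m_B t * ∫ v in (0:ℝ)..t,
      (p * lam_A * G_A v + lam_B) * (1 - G_B (t - v))) atTop
      (nhds (mB_inf * ((p * lam_A + lam_B) * α_B))) := hmB.mul hJ
  have key : mA_inf * (lam_A * α_A) = mB_inf * ((p * lam_A + lam_B) * α_B) := by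
    refine tendsto_nhds_unique (hL.congr' ?_) hR
    filter_upwards [eventually_ge_atTop (0:ℝ)] with t ht using heq t ht
  linarith [key]
end

section
/- Let G_A, G_B : ℝ → ℝ be service-time distribution functions (monotone nondecreasing on [0,∞), with 0 ≤ G(v) ≤ 1 for v ≥ 0 and G(v) → 1 as v → ∞), such that v ↦ 1 − G_B(v) is integrable on [0,∞) with α_B = ∫₀^∞ (1 − G_B(v)) dv. Let λ_A, λ_B ≥ 0 and p ∈ [0,1]. Then lim_{t→∞} ∫₀ᵗ (p·λ_A·G_A(v) + λ_B)·(1 − G_B(t − v)) dv = (p·λ_A + λ_B)·α_B. -/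
open MeasureTheory Filter Real Set

/-- The Poisson parameter of the number of pensioners at node `B` converges to
`(p·λ_A + λ_B)·α_B` as `t → ∞`. -/
theorem pensioners_poisson_parameter_limit
    (G_A G_B : ℝ → ℝ)
    (hGA_mono : MonotoneOn G_A (Set.Ici 0))
    (hGB_mono : MonotoneOn G_B (Set.Ici 0))
    (hGA_bdd : ∀ v ≥ (0:ℝ), 0 ≤ G_A v ∧ G_A v ≤ 1)
    (hGB_bdd : ∀ v ≥ (0:ℝ), 0 ≤ G_B v ∧ G_B v ≤ 1)
    (hGA_lim : Tendsto G_A atTop (nhds 1))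
    (hGB_lim : Tendsto G_B atTop (nhds 1))
    (hGB_int : IntegrableOn (fun v => 1 - G_B v) (Set.Ici 0))
    (α_B : ℝ) (hαB : α_B = ∫ v in Set.Ioi (0:ℝ), (1 - G_B v))
    (lam_A lam_B : ℝ) (hlamA : 0 ≤ lam_A) (hlamB : 0 ≤ lam_B)
    (p : ℝ) (hp : p ∈ Set.Icc (0:ℝ) 1) :
    Tendsto (fun t => ∫ v in (0:ℝ)..t, (p * lam_A * G_A v + lam_B) * (1 - G_B (t - v)))
      atTop (nhds ((p * lam_A + lam_B) * α_B)) := by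
  obtain ⟨hp0, hp1⟩ := hp
  set c : ℝ := p * lam_A + lam_B with hc
  set h : ℝ → ℝ := fun v => 1 - G_B v with hh
  set GA : ℝ → ℝ := fun v => G_A (max v 0) with hGA
  have hGAmono : Monotone GA := fun x y hxy =>
    hGA_mono (le_max_right x 0) (le_max_right y 0) (max_le_max hxy le_rfl)
  have hGAmeas : Measurable GA := hGAmono.measurable
  have hGAbdd : ∀ v, 0 ≤ GA v ∧ GA v ≤ 1 := fun v => hGA_bdd _ (le_max_right v 0)
  set f : ℝ → ℝ := fun v => p * lam_A * GA v + lam_B with hf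
  have hc0 : 0 ≤ c := add_nonneg (mul_nonneg hp0 hlamA) hlamB
  have hf_bdd : ∀ v, 0 ≤ f v ∧ f v ≤ c := by
    intro v
    constructor
    · exact add_nonneg (mul_nonneg (mul_nonneg hp0 hlamA) (hGAbdd v).1) hlamB
    · have h1 : p * lam_A * GA v ≤ p * lam_A := by
        simpa using mul_le_mul_of_nonneg_left (hGAbdd v).2 (mul_nonneg hp0 hlamA)
      exact add_le_add_left h1 lam_B
  have hmaxtop : Tendsto (fun v : ℝ => max v 0) atTop atTop :=
    tendsto_atTop_mono (fun v => le_max_left v 0) tendsto_id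
  have hGAlim : Tendsto GA atTop (nhds 1) := hGA_lim.comp hmaxtop
  have hflim : Tendsto f atTop (nhds c) := by
    have := (hGAlim.const_mul (p * lam_A)).add_const lam_B
    simpa [hc] using this
  have hfmeas : Measurable f := (hGAmeas.const_mul _).add_const _
  have hh_int : IntegrableOn h (Set.Ioi 0) := hGB_int.mono_set Set.Ioi_subset_Ici_self
  have hh_nonneg : ∀ u ∈ Set.Ioi (0:ℝ), 0 ≤ h u := fun u hu =>
    sub_nonneg.mpr (hGB_bdd u (le_of_lt hu)).2
  set μ := volume.restrict (Set.Ioi (0:ℝ)) with hμ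
  set F : ℝ → ℝ → ℝ := fun t u => (Set.Ioc (0:ℝ) t).indicator (fun u => f (t - u) * h u) u
    with hF
  -- key rewriting of the interval integral
  have key : ∀ t : ℝ, 0 ≤ t →
      (∫ v in (0:ℝ)..t, (p * lam_A * G_A v + lam_B) * (1 - G_B (t - v)))
        = ∫ u, F t u ∂μ := by
    intro t ht
    have step1 : (∫ v in (0:ℝ)..t, (p * lam_A * G_A v + lam_B) * (1 - G_B (t - v)))
        = ∫ v in (0:ℝ)..t, f v * h (t - v) := by
      apply intervalIntegral.integral_congr
      intro v hv
      rw [Set.uIcc_of_le ht] at hv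
      have hv0 : (0:ℝ) ≤ v := hv.1
      simp [hf, hGA, hh, max_eq_left hv0]
    have step2 : (∫ v in (0:ℝ)..t, f v * h (t - v))
        = ∫ u in (0:ℝ)..t, f (t - u) * h u := by
      have := intervalIntegral.integral_comp_sub_left (a := 0) (b := t)
        (fun x => f x * h (t - x)) t
      simp only [sub_self, sub_zero, sub_sub_cancel] at this
      exact this.symm
    have step3 : (∫ u in (0:ℝ)..t, f (t - u) * h u)
        = ∫ u in Set.Ioc (0:ℝ) t, f (t - u) * h u := intervalIntegral.integral_of_le ht
    have step4 : (∫ u in Set.Ioc (0:ℝ) t, f (t - u) * h u) = ∫ u, F t u ∂μ := by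
      rw [hF, integral_indicator measurableSet_Ioc, hμ,
        Measure.restrict_restrict measurableSet_Ioc,
        Set.inter_eq_left.mpr Set.Ioc_subset_Ioi_self]
    rw [step1, step2, step3, step4]
  -- dominated convergence
  have hmain : Tendsto (fun t => ∫ u, F t u ∂μ) atTop (nhds (∫ u, c * h u ∂μ)) := by
    apply tendsto_integral_filter_of_dominated_convergence (bound := fun u => c * h u)
    · filter_upwards with t
      exact (((hfmeas.comp (measurable_const.sub measurable_id)).aestronglyMeasurable).mul
        hh_int.1).indicator measurableSet_Ioc
    · filter_upwards with t
      filter_upwards [ae_restrict_mem measurableSet_Ioi] with u hu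
      by_cases hmem : u ∈ Set.Ioc (0:ℝ) t
      · rw [hF]
        simp only [Set.indicator_of_mem hmem]
        rw [Real.norm_eq_abs, abs_of_nonneg (mul_nonneg (hf_bdd _).1 (hh_nonneg u hu))]
        exact mul_le_mul_of_nonneg_right (hf_bdd _).2 (hh_nonneg u hu)
      · rw [hF]
        simp only [Set.indicator_of_notMem hmem, norm_zero]
        exact mul_nonneg hc0 (hh_nonneg u hu)
    · exact (hh_int.const_mul c)
    · filter_upwards [ae_restrict_mem measurableSet_Ioi] with u hu
      have h1 : Tendsto (fun t => f (t - u)) atTop (nhds c) :=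
        hflim.comp (tendsto_atTop_add_const_right atTop (-u) tendsto_id)
      have h2 : Tendsto (fun t => f (t - u) * h u) atTop (nhds (c * h u)) :=
        h1.mul_const (h u)
      refine h2.congr' ?_
      filter_upwards [eventually_ge_atTop u] with t htu
      have hmem : u ∈ Set.Ioc (0:ℝ) t := ⟨hu, htu⟩
      rw [hF]
      exact (Set.indicator_of_mem hmem (fun u => f (t - u) * h u)).symm
  have hval : (∫ u, c * h u ∂μ) = c * α_B := by
    rw [MeasureTheory.integral_const_mul, ← hαB]
  rw [hc] at hval
  refine Tendsto.congr' ?_ (hval ▸ hmain)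
  filter_upwards [eventually_ge_atTop (0:ℝ)] with t ht
  exact (key t ht).symm
end

section
/- Let γ > 0, ρ > 0 and β > −γ, and define G(v) = 1 − (1 − exp(−ρ))·(γ + β)/(γ·(exp(−ρ)·(exp((γ + β)·v) − 1) + 1)) for v ≥ 0. Then lim_{t→∞} ∫₀ᵗ (1 − G(v)) dv = ρ/γ; that is, the mean of the distribution G equals ρ/γ. -/
open MeasureTheory Filter Real Set

/-- The mean of the particular family of service-time distribution functions equals
`ρ/γ`:  `lim_{t→∞} ∫₀ᵗ (1 − G(v)) dv = ρ/γ`. -/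
theorem particular_family_mean
    (γ ρ β : ℝ) (hγ : 0 < γ) (hρ : 0 < ρ) (hβ : -γ < β) :
    Tendsto
      (fun t => ∫ v in (0:ℝ)..t,
        (1 - (1 - (1 - Real.exp (-ρ)) * (γ + β)
          / (γ * (Real.exp (-ρ) * (Real.exp ((γ + β) * v) - 1) + 1)))))
      atTop (nhds (ρ / γ)) := by
  set q : ℝ := Real.exp (-ρ) with hqdef
  have hq0 : 0 < q := Real.exp_pos _
  have hq1 : q < 1 := by
    rw [hqdef]
    calc Real.exp (-ρ) < Real.exp 0 := Real.exp_lt_exp.mpr (by linarith)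
      _ = 1 := Real.exp_zero
  set a : ℝ := γ + β with hadef
  have ha : 0 < a := by simp [hadef]; linarith
  have hden : ∀ v : ℝ, 0 < q * (Real.exp (a * v) - 1) + 1 := by
    intro v
    have h1 : 0 < q * Real.exp (a * v) := mul_pos hq0 (Real.exp_pos _)
    nlinarith
  have hD : ∀ v : ℝ, 0 < q + (1 - q) * Real.exp (-(a * v)) := by
    intro v
    have := Real.exp_pos (-(a * v))
    nlinarith
  set F : ℝ → ℝ := fun v => -Real.log (q + (1 - q) * Real.exp (-(a * v))) / γ with hF
  have hderiv : ∀ v : ℝ, HasDerivAt F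
      (1 - (1 - (1 - q) * a / (γ * (q * (Real.exp (a * v) - 1) + 1)))) v := by
    intro v
    have h1 : HasDerivAt (fun v : ℝ => -(a * v)) (-a) v := by
      simpa using ((hasDerivAt_id v).const_mul (-a))
    have h2 := h1.exp
    have h3 := (h2.const_mul (1 - q)).const_add q
    have h4 := (h3.log (ne_of_gt (hD v))).neg.div_const γ
    refine h4.congr_deriv ?_
    have hdv := hden v
    have hDv := hD v
    have hex : Real.exp (-(a * v)) * Real.exp (a * v) = 1 := by
      rw [← Real.exp_add]; simp
    field_simp
    linear_combination ((1 - q) * a * q) * hex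
  have hcont : Continuous (fun v : ℝ =>
      (1 - (1 - (1 - q) * a / (γ * (q * (Real.exp (a * v) - 1) + 1))))) := by
    apply Continuous.sub continuous_const
    apply Continuous.sub continuous_const
    apply Continuous.div continuous_const (by continuity)
    intro v
    exact ne_of_gt (mul_pos hγ (hden v))
  have hint : ∀ t : ℝ, (∫ v in (0:ℝ)..t,
      (1 - (1 - (1 - q) * a / (γ * (q * (Real.exp (a * v) - 1) + 1))))) = F t - F 0 := by
    intro t
    exact intervalIntegral.integral_eq_sub_of_hasDerivAt (fun v _ => hderiv v)
      (hcont.intervalIntegrable 0 t)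
  have hF0 : F 0 = 0 := by simp [hF]
  have hlim : Tendsto F atTop (nhds (ρ / γ)) := by
    have hexp : Tendsto (fun t : ℝ => Real.exp (-(a * t))) atTop (nhds 0) := by
      have h1 : Tendsto (fun t : ℝ => a * t) atTop atTop :=
        Tendsto.const_mul_atTop ha tendsto_id
      exact Real.tendsto_exp_neg_atTop_nhds_zero.comp h1
    have hDlim : Tendsto (fun t : ℝ => q + (1 - q) * Real.exp (-(a * t))) atTop (nhds q) := by
      have := (hexp.const_mul (1 - q)).const_add q
      simpa using this
    have hlog : Tendsto (fun t : ℝ => Real.log (q + (1 - q) * Real.exp (-(a * t))))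
        atTop (nhds (-ρ)) := by
      have := (Real.continuousAt_log (ne_of_gt hq0)).tendsto.comp hDlim
      simpa [hqdef, Real.log_exp, Function.comp_def] using this
    have := (hlog.neg).div_const γ
    simpa [hF, neg_neg] using this
  have hcongr : (fun t => ∫ v in (0:ℝ)..t,
        (1 - (1 - (1 - Real.exp (-ρ)) * (γ + β)
          / (γ * (Real.exp (-ρ) * (Real.exp ((γ + β) * v) - 1) + 1))))) = F := by
    funext t
    rw [← hqdef, ← hadef, hint t, hF0, sub_zero]
  rw [hcongr]
  exact hlim
end
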